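/- Let n ≥ 2 and let c < 0 be a real number. Let A_n(c) be the n×n real symmetric tridiagonal matrix with A_{11} = c, A_{ii} = 2 for 2 ≤ i ≤ n, off-diagonal entries A_{i,i+1} = A_{i+1,i} = -1, and all other entries 0. Then the signature of A_n(c) equals n - 2. -/

import Mathlib

noncomputable section

/-- The `n×n` symmetric tridiagonal matrix with `(1,1)`-entry `c`, remaining diagonal
entries `2`, off-diagonal (adjacent) entries `-1`, and all other entries `0`. -/
def A (n : ℕ) (c : ℝ) : Matrix (Fin n) (Fin n) ℝ := fun i j =>
  if i = j then (if (i : ℕ) = 0 then c else 2)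
  else if (i : ℕ) + 1 = (j : ℕ) ∨ (j : ℕ) + 1 = (i : ℕ) then -1 else 0

open Matrix Finset

namespace ASig

variable {n : ℕ} {c : ℝ}


/-- Coordinates outside `s` of a vector in the span of the standard basis vectors in `s` vanish. -/
lemma coord_zero {s : Set (Fin n)} {y : Fin n → ℝ}
    (hy : y ∈ Submodule.span ℝ ((fun i => (Pi.single i 1 : Fin n → ℝ)) '' s))
    {j : Fin n} (hj : j ∉ s) : y j = 0 := by
  have hle : Submodule.span ℝ ((fun i => (Pi.single i 1 : Fin n → ℝ)) '' s)
      ≤ LinearMap.ker (LinearMap.proj (R := ℝ) (φ := fun _ : Fin n => ℝ) j) := by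
    rw [Submodule.span_le]
    rintro _ ⟨i, hi, rfl⟩
    simp only [SetLike.mem_coe, LinearMap.mem_ker, LinearMap.proj_apply, Pi.single_apply]
    rw [if_neg]
    rintro rfl; exact hj hi
  simpa using hle hy

lemma finrank_span_single (s : Finset (Fin n)) :
    Module.finrank ℝ (Submodule.span ℝ
      ((fun i => (Pi.single i 1 : Fin n → ℝ)) '' (s : Set (Fin n)))) = s.card := by
  have li : LinearIndependent ℝ (fun i : (s : Set (Fin n)) =>
      (Pi.single (i : Fin n) 1 : Fin n → ℝ)) := by
    have := (Pi.basisFun ℝ (Fin n)).linearIndependent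
    have h2 := this.comp (fun i : (s : Set (Fin n)) => (i : Fin n)) Subtype.val_injective
    have he : (fun i : (s : Set (Fin n)) => (Pi.single (i : Fin n) 1 : Fin n → ℝ))
        = (⇑(Pi.basisFun ℝ (Fin n)) ∘ fun i : (s : Set (Fin n)) => (i : Fin n)) := by
      funext i; simp
    rw [he]; exact h2
  have := finrank_span_eq_card li
  have hr : Set.range (fun i : (s : Set (Fin n)) => (Pi.single (i : Fin n) 1 : Fin n → ℝ))
      = (fun i => (Pi.single i 1 : Fin n → ℝ)) '' (s : Set (Fin n)) :=
    (Set.image_eq_range (fun i => (Pi.single i 1 : Fin n → ℝ)) (s : Set (Fin n))).symm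
  rw [hr] at this
  rw [this]
  simp

lemma card_le_of_congruent (d1 d2 : Fin n → ℝ)
    (e1 e2 : (Fin n → ℝ) ≃ₗ[ℝ] (Fin n → ℝ))
    (h : ∀ x, ∑ i, d1 i * (e1 x i) ^ 2 = ∑ i, d2 i * (e2 x i) ^ 2) :
    (univ.filter fun i => 0 < d2 i).card ≤ (univ.filter fun i => 0 < d1 i).card := by
  classical
  set P1 := univ.filter fun i => 0 < d1 i with hP1
  set P2 := univ.filter fun i => 0 < d2 i with hP2
  set U : Submodule ℝ (Fin n → ℝ) := Submodule.comap (e2 : (Fin n → ℝ) →ₗ[ℝ] (Fin n → ℝ))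
    (Submodule.span ℝ ((fun i => (Pi.single i 1 : Fin n → ℝ)) '' (P2 : Set (Fin n)))) with hU
  set W : Submodule ℝ (Fin n → ℝ) := Submodule.comap (e1 : (Fin n → ℝ) →ₗ[ℝ] (Fin n → ℝ))
    (Submodule.span ℝ ((fun i => (Pi.single i 1 : Fin n → ℝ)) '' ((P1ᶜ : Finset (Fin n)) : Set (Fin n)))) with hW
  have hUrank : Module.finrank ℝ U = P2.card := by
    rw [hU, Submodule.comap_equiv_eq_map_symm, LinearEquiv.finrank_map_eq,
      finrank_span_single]
  have hWrank : Module.finrank ℝ W = (P1ᶜ : Finset (Fin n)).card := by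
    rw [hW, Submodule.comap_equiv_eq_map_symm, LinearEquiv.finrank_map_eq,
      finrank_span_single]
  -- Q is positive on U \ {0}
  have hUpos : ∀ x ∈ U, x ≠ 0 → 0 < ∑ i, d2 i * (e2 x i) ^ 2 := by
    intro x hx hx0
    have hy : e2 x ∈ Submodule.span ℝ
        ((fun i => (Pi.single i 1 : Fin n → ℝ)) '' (P2 : Set (Fin n))) := hx
    have hy0 : e2 x ≠ 0 := fun hh => hx0 (by simpa using e2.injective (by simpa using hh))
    obtain ⟨j, hj⟩ : ∃ j, e2 x j ≠ 0 := by
      by_contra hcon; push_neg at hcon; exact hy0 (funext hcon)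
    have hjP2 : j ∈ P2 := by
      by_contra hjn
      exact hj (coord_zero hy (by simpa using hjn))
    have hd2j : 0 < d2 j := by simpa [hP2] using hjP2
    refine Finset.sum_pos' (fun i _ => ?_) ⟨j, Finset.mem_univ j, ?_⟩
    · by_cases hi : i ∈ P2
      · have : 0 < d2 i := by simpa [hP2] using hi
        positivity
      · rw [coord_zero hy (by simpa using hi)]; ring_nf; simp
    · have : (0:ℝ) < (e2 x j) ^ 2 := by positivity
      positivity
  -- Q is nonpositive on W
  have hWnonpos : ∀ x ∈ W, ∑ i, d1 i * (e1 x i) ^ 2 ≤ 0 := by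
    intro x hx
    have hy : e1 x ∈ Submodule.span ℝ
        ((fun i => (Pi.single i 1 : Fin n → ℝ)) '' ((P1ᶜ : Finset (Fin n)) : Set (Fin n))) := hx
    refine Finset.sum_nonpos fun i _ => ?_
    by_cases hi : i ∈ P1
    · have : i ∉ ((P1ᶜ : Finset (Fin n)) : Set (Fin n)) := by simpa using hi
      rw [coord_zero hy this]; ring_nf; simp
    · have hd : d1 i ≤ 0 := by
        have := hi; simp only [hP1, Finset.mem_filter, Finset.mem_univ, true_and] at this
        linarith [not_lt.mp this]
      have : (0:ℝ) ≤ (e1 x i) ^ 2 := by positivity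
      nlinarith
  have hdisj : U ⊓ W = ⊥ := by
    rw [Submodule.eq_bot_iff]
    rintro x ⟨hxU, hxW⟩
    by_contra hx0
    have h1 := hUpos x hxU hx0
    have h2 := hWnonpos x hxW
    rw [h x] at h2
    linarith
  have hsum : Module.finrank ℝ U + Module.finrank ℝ W ≤ n := by
    have := Submodule.finrank_sup_add_finrank_inf_eq U W
    rw [hdisj] at this
    simp only [finrank_bot, add_zero] at this
    have hle : Module.finrank ℝ (U ⊔ W : Submodule ℝ (Fin n → ℝ)) ≤
        Module.finrank ℝ (Fin n → ℝ) := Submodule.finrank_le _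
    rw [Module.finrank_fin_fun] at hle
    omega
  rw [hUrank, hWrank, Finset.card_compl, Fintype.card_fin] at hsum
  have : P1.card ≤ n := by
    simpa using Finset.card_filter_le univ (fun i => 0 < d1 i)
  omega

lemma card_pos_eq (d1 d2 : Fin n → ℝ)
    (e1 e2 : (Fin n → ℝ) ≃ₗ[ℝ] (Fin n → ℝ))
    (h : ∀ x, ∑ i, d1 i * (e1 x i) ^ 2 = ∑ i, d2 i * (e2 x i) ^ 2) :
    (univ.filter fun i => 0 < d1 i).card = (univ.filter fun i => 0 < d2 i).card :=
  le_antisymm (card_le_of_congruent d2 d1 e2 e1 fun x => (h x).symm)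
    (card_le_of_congruent d1 d2 e1 e2 h)

lemma card_neg_eq (d1 d2 : Fin n → ℝ)
    (e1 e2 : (Fin n → ℝ) ≃ₗ[ℝ] (Fin n → ℝ))
    (h : ∀ x, ∑ i, d1 i * (e1 x i) ^ 2 = ∑ i, d2 i * (e2 x i) ^ 2) :
    (univ.filter fun i => d1 i < 0).card = (univ.filter fun i => d2 i < 0).card := by
  have := card_pos_eq (fun i => -d1 i) (fun i => -d2 i) e1 e2 (fun x => by
    have := h x
    have h1 : ∑ i, -d1 i * (e1 x i) ^ 2 = -∑ i, d1 i * (e1 x i) ^ 2 := by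
      rw [← Finset.sum_neg_distrib]; ring_nf
    have h2 : ∑ i, -d2 i * (e2 x i) ^ 2 = -∑ i, d2 i * (e2 x i) ^ 2 := by
      rw [← Finset.sum_neg_distrib]; ring_nf
    rw [h1, h2, this])
  simpa [neg_pos] using this


/-- pivot sequence of the LDLᵀ factorization -/
def piv (c : ℝ) : ℕ → ℝ
  | 0 => c
  | k + 1 => 2 - 1 / piv c k

lemma piv_pos (hc : c < 0) : ∀ k, 1 ≤ k → 1 < piv c k := by
  intro k hk
  induction k with
  | zero => omega
  | succ m ih =>
    show 1 < 2 - 1 / piv c m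
    rcases Nat.eq_zero_or_pos m with hm | hm
    · subst hm
      have : 1 / c < 0 := by
        apply one_div_neg.mpr hc
      show 1 < 2 - 1 / piv c 0
      simp only [piv]
      linarith
    · have h1 : 1 < piv c m := ih hm
      have h2 : 0 < 1 / piv c m := by positivity
      have h3 : 1 / piv c m < 1 := by
        rw [div_lt_one (by linarith)]; linarith
      linarith

lemma piv_ne (hc : c < 0) (k : ℕ) : piv c k ≠ 0 := by
  rcases Nat.eq_zero_or_pos k with hk | hk
  · subst hk; exact ne_of_lt hc
  · exact ne_of_gt (lt_trans one_pos (piv_pos hc k hk))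

/-- extension of a vector by zero -/
def ext' (n : ℕ) (x : Fin n → ℝ) : ℕ → ℝ := fun m => if h : m < n then x ⟨m, h⟩ else 0

@[simp] lemma ext'_coe (x : Fin n → ℝ) (i : Fin n) : ext' n x i = x i := by
  simp [ext', i.isLt]

@[simp] lemma ext'_of_ge (x : Fin n → ℝ) {m : ℕ} (h : n ≤ m) : ext' n x m = 0 := by
  simp [ext', not_lt.mpr h]

lemma ext'_add (x y : Fin n → ℝ) (m : ℕ) :
    ext' n (x + y) m = ext' n x m + ext' n y m := by
  unfold ext'; split <;> simp

lemma ext'_smul (a : ℝ) (x : Fin n → ℝ) (m : ℕ) :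
    ext' n (a • x) m = a * ext' n x m := by
  unfold ext'; split <;> simp

/-- the (transposed) unit bidiagonal transformation `Lᵀ` -/
def lmap (n : ℕ) (c : ℝ) : (Fin n → ℝ) →ₗ[ℝ] (Fin n → ℝ) where
  toFun x := fun k => x k - ext' n x ((k : ℕ) + 1) / piv c k
  map_add' x y := by
    funext k
    simp only [ext'_add, Pi.add_apply]
    ring
  map_smul' a x := by
    funext k
    simp only [ext'_smul, Pi.smul_apply, RingHom.id_apply, smul_eq_mul]
    ring

lemma lmap_apply (x : Fin n → ℝ) (k : Fin n) :
    lmap n c x k = x k - ext' n x ((k : ℕ) + 1) / piv c k := rfl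

lemma lmap_inj (hc : c < 0) : Function.Injective (lmap n c) := by
  rw [← LinearMap.ker_eq_bot, Submodule.eq_bot_iff]
  intro x hx
  rw [LinearMap.mem_ker] at hx
  have key : ∀ m : ℕ, ∀ i : Fin n, n ≤ (i : ℕ) + m → x i = 0 := by
    intro m
    induction m with
    | zero => intro i hi; exact absurd hi (by omega)
    | succ k ih =>
      intro i hi
      have h0 : lmap n c x i = 0 := congrFun hx i
      rw [lmap_apply] at h0
      by_cases hlt : (i : ℕ) + 1 < n
      · have : x ⟨(i : ℕ) + 1, hlt⟩ = 0 := ih ⟨(i : ℕ) + 1, hlt⟩ (by simp; omega)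
        have he : ext' n x ((i : ℕ) + 1) = 0 := by
          simp [ext', hlt, this]
        rw [he] at h0
        simpa using h0
      · have he : ext' n x ((i : ℕ) + 1) = 0 := ext'_of_ge x (by omega)
        rw [he] at h0
        simpa using h0
  funext i
  exact key n i (by omega)

/-- `lmap` as a linear equivalence -/
def lequiv (n : ℕ) (c : ℝ) (hc : c < 0) : (Fin n → ℝ) ≃ₗ[ℝ] (Fin n → ℝ) :=
  LinearEquiv.ofBijective (lmap n c)
    ⟨lmap_inj hc, (LinearMap.injective_iff_surjective).mp (lmap_inj hc)⟩

lemma lequiv_apply (hc : c < 0) (x : Fin n → ℝ) (k : Fin n) :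
    lequiv n c hc x k = x k - ext' n x ((k : ℕ) + 1) / piv c k := rfl

/-- diagonal entries as a function of ℕ -/
def Dd (c : ℝ) (m : ℕ) : ℝ := if m = 0 then c else 2

/-- superdiagonal matrix -/
def Tm (n : ℕ) : Matrix (Fin n) (Fin n) ℝ := fun i j => if (j : ℕ) = (i : ℕ) + 1 then -1 else 0

lemma A_eq (n : ℕ) (c : ℝ) :
    A n c = Matrix.diagonal (fun i : Fin n => Dd c i) + Tm n + (Tm n)ᵀ := by
  ext i j
  simp only [A, Matrix.add_apply, Matrix.diagonal_apply, Matrix.transpose_apply, Tm, Dd,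
    Fin.ext_iff]
  split_ifs with h1 h2 h3 h4
  all_goals try (exfalso; omega)
  all_goals norm_num

lemma Tm_mulVec (x : Fin n → ℝ) (i : Fin n) :
    (Tm n *ᵥ x) i = -(ext' n x ((i : ℕ) + 1)) := by
  unfold Tm mulVec dotProduct
  by_cases h : (i : ℕ) + 1 < n
  · rw [Fintype.sum_eq_single (⟨(i : ℕ) + 1, h⟩ : Fin n)]
    · dsimp only; simp [ext', h]
    · intro b hb
      dsimp only
      rw [if_neg, zero_mul]
      intro hb'
      exact hb (by rw [Fin.ext_iff]; simpa using hb')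
  · rw [Finset.sum_eq_zero, ext'_of_ge x (by omega)]
    · simp
    · intro b _
      dsimp only
      rw [if_neg, zero_mul]
      intro hb'
      omega

lemma dot_A (c : ℝ) (x : Fin n → ℝ) :
    x ⬝ᵥ (A n c) *ᵥ x
      = (∑ i ∈ range n, Dd c i * (ext' n x i) ^ 2)
        - 2 * ∑ i ∈ range n, ext' n x i * ext' n x (i + 1) := by
  have hdiag : x ⬝ᵥ (Matrix.diagonal (fun i : Fin n => Dd c i)) *ᵥ x
      = ∑ i ∈ range n, Dd c i * (ext' n x i) ^ 2 := by
    rw [← Fin.sum_univ_eq_sum_range (fun m => Dd c m * (ext' n x m) ^ 2) n]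
    simp only [dotProduct, mulVec_diagonal, ext'_coe]
    apply Finset.sum_congr rfl
    intro i _
    ring
  have hT : x ⬝ᵥ (Tm n) *ᵥ x = -∑ i ∈ range n, ext' n x i * ext' n x (i + 1) := by
    rw [← Fin.sum_univ_eq_sum_range (fun m => ext' n x m * ext' n x (m + 1)) n]
    simp only [dotProduct, Tm_mulVec, ext'_coe]
    rw [← Finset.sum_neg_distrib]
    apply Finset.sum_congr rfl
    intro i _
    ring
  have hTt : x ⬝ᵥ (Tm n)ᵀ *ᵥ x = x ⬝ᵥ (Tm n) *ᵥ x := by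
    rw [Matrix.mulVec_transpose, dotProduct_comm, ← Matrix.dotProduct_mulVec]
  rw [A_eq, Matrix.add_mulVec, Matrix.add_mulVec, dotProduct_add,
    dotProduct_add, hdiag, hTt, hT]
  ring

lemma tele (hc : c < 0) (X : ℕ → ℝ) (m : ℕ) :
    ∑ i ∈ range m, piv c i * (X i - X (i + 1) / piv c i) ^ 2
      = (∑ i ∈ range m, Dd c i * X i ^ 2) - 2 * (∑ i ∈ range m, X i * X (i + 1))
        + (if m = 0 then 0 else X m ^ 2 / piv c (m - 1)) := by
  induction m with
  | zero => simp
  | succ k ih =>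
    rw [Finset.sum_range_succ, Finset.sum_range_succ (f := fun i => Dd c i * X i ^ 2),
      Finset.sum_range_succ (f := fun i => X i * X (i + 1)), ih]
    rcases Nat.eq_zero_or_pos k with hk | hk
    · subst hk
      have h0 : piv c 0 = c := rfl
      have key : piv c 0 * (X 0 - X 1 / piv c 0) ^ 2
          = Dd c 0 * X 0 ^ 2 - 2 * (X 0 * X 1) + X 1 ^ 2 / piv c 0 := by
        rw [h0]
        have : c ≠ 0 := ne_of_lt hc
        rw [show Dd c 0 = c from rfl]
        field_simp [Dd]
        ring
      simp only [if_pos rfl, if_neg (Nat.one_ne_zero)]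
      rw [show (1:ℕ) - 1 = 0 from rfl]
      linarith [key]
    · obtain ⟨j, rfl⟩ : ∃ j, k = j + 1 := ⟨k - 1, by omega⟩
      have h1 : piv c (j + 1) ≠ 0 := piv_ne hc _
      have h2 : piv c j ≠ 0 := piv_ne hc _
      have hrec : piv c (j + 1) = 2 - 1 / piv c j := rfl
      have key : piv c (j + 1) * (X (j + 1) - X (j + 2) / piv c (j + 1)) ^ 2
            + X (j + 1) ^ 2 / piv c j
          = Dd c (j + 1) * X (j + 1) ^ 2 - 2 * (X (j + 1) * X (j + 2))
            + X (j + 2) ^ 2 / piv c (j + 1) := by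
        have hD : Dd c (j + 1) = 2 := by simp [Dd]
        have h3 : 2 * piv c j - 1 ≠ 0 := by
          intro hz
          rw [hrec] at h1
          apply h1
          field_simp
          linarith
        have hrec2 : piv c (j + 1) = (2 * piv c j - 1) / piv c j := by
          rw [hrec]; field_simp
        rw [hD, hrec2]
        field_simp
        ring
      simp only [if_neg (Nat.succ_ne_zero j), if_neg (Nat.succ_ne_zero (j+1))]
      rw [show j + 1 + 1 - 1 = j + 1 from rfl, show j + 1 - 1 = j from rfl]
      linarith [key]

lemma quad_piv (hc : c < 0) (x : Fin n → ℝ) :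
    x ⬝ᵥ (A n c) *ᵥ x = ∑ i : Fin n, piv c i * (lequiv n c hc x i) ^ 2 := by
  have hr : ∑ i : Fin n, piv c i * (lequiv n c hc x i) ^ 2
      = ∑ i ∈ range n, piv c i * (ext' n x i - ext' n x (i + 1) / piv c i) ^ 2 := by
    rw [← Fin.sum_univ_eq_sum_range
      (fun m => piv c m * (ext' n x m - ext' n x (m + 1) / piv c m) ^ 2) n]
    apply Finset.sum_congr rfl
    intro i _
    rw [lequiv_apply, ext'_coe]
  rw [hr, tele hc (ext' n x) n, dot_A]
  have : ext' n x n = 0 := ext'_of_ge x le_rfl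
  rw [this]
  split_ifs <;> simp

end ASig


namespace ASig

variable {n : ℕ} {c : ℝ}

/-- linear equivalence from a two-sided inverse pair of matrices -/
def mEquiv (M N : Matrix (Fin n) (Fin n) ℝ) (h1 : M * N = 1) (h2 : N * M = 1) :
    (Fin n → ℝ) ≃ₗ[ℝ] (Fin n → ℝ) :=
  LinearEquiv.ofLinear M.mulVecLin N.mulVecLin
    (by rw [← Matrix.mulVecLin_mul, h1, Matrix.mulVecLin_one])
    (by rw [← Matrix.mulVecLin_mul, h2, Matrix.mulVecLin_one])

lemma mEquiv_apply (M N : Matrix (Fin n) (Fin n) ℝ) (h1 : M * N = 1) (h2 : N * M = 1)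
    (x : Fin n → ℝ) : mEquiv M N h1 h2 x = M *ᵥ x := rfl

lemma quad_spectral {M : Matrix (Fin n) (Fin n) ℝ} (hM : M.IsHermitian) (x : Fin n → ℝ) :
    x ⬝ᵥ M *ᵥ x = ∑ i, hM.eigenvalues i *
      (((star (hM.eigenvectorUnitary : Matrix (Fin n) (Fin n) ℝ)) *ᵥ x) i) ^ 2 := by
  set U := (hM.eigenvectorUnitary : Matrix (Fin n) (Fin n) ℝ) with hUdef
  have hofReal : (RCLike.ofReal ∘ hM.eigenvalues : Fin n → ℝ) = hM.eigenvalues := by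
    rw [RCLike.ofReal_real_eq_id]; rfl
  have hstar : star U = Uᵀ := by
    ext i j
    simp [Matrix.star_eq_conjTranspose, Matrix.conjTranspose_apply]
  conv_lhs => rw [hM.spectral_theorem, Unitary.conjStarAlgAut_apply, hofReal]
  rw [← Matrix.mulVec_mulVec, ← Matrix.mulVec_mulVec, Matrix.dotProduct_mulVec,
    ← Matrix.mulVec_transpose, ← hstar]
  simp only [dotProduct, Matrix.mulVec_diagonal]
  apply Finset.sum_congr rfl
  intro i _
  ring

lemma neg_piv_card (hn : 1 ≤ n) (hc : c < 0) :
    (univ.filter fun i : Fin n => piv c i < 0).card = 1 := by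
  have : (univ.filter fun i : Fin n => piv c i < 0) = {(⟨0, by omega⟩ : Fin n)} := by
    ext i
    simp only [Finset.mem_filter, Finset.mem_univ, true_and, Finset.mem_singleton]
    constructor
    · intro h
      by_contra hne
      have hi0 : (i : ℕ) ≠ 0 := by
        intro h0; exact hne (by apply Fin.ext; simpa using h0)
      have := piv_pos hc (i : ℕ) (by omega)
      linarith
    · rintro rfl
      simpa [piv] using hc
  rw [this, Finset.card_singleton]

lemma pos_piv_card (hn : 1 ≤ n) (hc : c < 0) :
    (univ.filter fun i : Fin n => 0 < piv c i).card = n - 1 := by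
  have hiff : (univ.filter fun i : Fin n => 0 < piv c i)
      = (univ.filter fun i : Fin n => ¬ piv c i < 0) := by
    ext i
    simp only [Finset.mem_filter, Finset.mem_univ, true_and]
    constructor
    · intro h; linarith
    · intro h
      rcases Nat.eq_zero_or_pos (i : ℕ) with h0 | h0
      · exfalso; apply h; rw [show piv c (i : ℕ) = piv c 0 from by rw [h0]]
        simpa [piv] using hc
      · have := piv_pos hc (i : ℕ) (by omega)
        linarith
  have htot : (univ.filter fun i : Fin n => piv c i < 0).card
      + (univ.filter fun i : Fin n => ¬ piv c i < 0).card = n := by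
    have := Finset.card_filter_add_card_filter_not
      (s := (univ : Finset (Fin n))) (p := fun i : Fin n => piv c i < 0)
    simpa using this
  rw [hiff]
  rw [neg_piv_card hn hc] at htot
  omega

end ASig


/-- For `n ≥ 2` and `c < 0`, the signature of `A_n(c)` (number of positive
eigenvalues minus number of negative eigenvalues) equals `n - 2`. -/
theorem A_signature_neg (n : ℕ) (hn : 2 ≤ n) (c : ℝ) (hc : c < 0) :
    ∀ hA : (A n c).IsHermitian,
      ((Finset.univ.filter fun i => 0 < hA.eigenvalues i).card : ℤ) -
          ((Finset.univ.filter fun i => hA.eigenvalues i < 0).card : ℤ) = (n : ℤ) - 2 := by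
  intro hA
  set U := (hA.eigenvectorUnitary : Matrix (Fin n) (Fin n) ℝ) with hUdef
  have h1 : star U * U = 1 := hA.eigenvectorUnitary.prop.1
  have h2 : U * star U = 1 := hA.eigenvectorUnitary.prop.2
  have hlink : ∀ x, ∑ i : Fin n, hA.eigenvalues i * ((ASig.mEquiv (star U) U h1 h2) x i) ^ 2
      = ∑ i : Fin n, ASig.piv c (i : ℕ) * ((ASig.lequiv n c hc) x i) ^ 2 := by
    intro x
    have hs := ASig.quad_spectral hA x
    have hp := ASig.quad_piv hc x
    rw [← hUdef] at hs
    simp only [ASig.mEquiv_apply]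
    rw [← hs]
    exact hp
  have hpos := ASig.card_pos_eq hA.eigenvalues (fun i : Fin n => ASig.piv c (i : ℕ))
    (ASig.mEquiv (star U) U h1 h2) (ASig.lequiv n c hc) hlink
  have hneg := ASig.card_neg_eq hA.eigenvalues (fun i : Fin n => ASig.piv c (i : ℕ))
    (ASig.mEquiv (star U) U h1 h2) (ASig.lequiv n c hc) hlink
  rw [ASig.pos_piv_card (by omega) hc] at hpos
  rw [ASig.neg_piv_card (by omega) hc] at hneg
  rw [hpos, hneg]
  have : (1:ℕ) ≤ n := by omega
  push_cast [Nat.cast_sub this]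
  ring
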